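/- Under the projector hypotheses with n ≥ 5 and ρ ≠ 0, the projector P can be recovered from T = ρ[((n−2)(n−3)/2)(g⊙g) + (P⊙P) − (n−3)(g⊙P)] by the formula P_{λκ} = [2(n−2)²/((n−1)(n−4))] · (T·T)_{λν}{}^ν{}_κ / (T·T)_{μν}{}^{μν} + [(n−2)(n−3)/((n−1)(n−4))] · Ḡ_{λκ}, for all indices λ, κ (the denominator (T·T)_{μν}{}^{μν} being nonzero). -/
import Mathlib


open Finset

variable {ι : Type*} [Fintype ι] [DecidableEq ι]

/-- Kulkarni–Nomizu product of two 2-tensors: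
`(A⊙B)_{μνλκ} = A_{μλ}B_{νκ} − A_{νλ}B_{μκ} − A_{μκ}B_{νλ} + A_{νκ}B_{μλ}`. -/
def KN (A B : ι → ι → ℝ) : ι → ι → ι → ι → ℝ :=
  fun μ ν l κ => A μ l * B ν κ - A ν l * B μ κ - A μ κ * B ν l + A ν κ * B μ l

/-- Contraction of two 2-tensors via the inverse metric:
`(A·B)_{μκ} = Σ_{ν,λ} A_{μν}(Ḡ⁻¹)_{νλ}B_{λκ}`. -/
def dot2 (Ginv : ι → ι → ℝ) (A B : ι → ι → ℝ) : ι → ι → ℝ :=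
  fun μ κ => ∑ ν, ∑ l, A μ ν * Ginv ν l * B l κ

/-- Contraction of two 4-tensors via the inverse metric:
`(R·S)_{μνλκ} = Σ R_{μνστ}(Ḡ⁻¹)_{σσ'}(Ḡ⁻¹)_{ττ'}S_{σ'τ'λκ}`. -/
def dot4 (Ginv : ι → ι → ℝ) (R S : ι → ι → ι → ι → ℝ) : ι → ι → ι → ι → ℝ :=
  fun μ ν l κ => ∑ σ, ∑ τ, ∑ σ', ∑ τ', R μ ν σ τ * Ginv σ σ' * Ginv τ τ' * S σ' τ' l κ

/-- Trace of a 2-tensor: `tr A = Σ_{μ,ν} (Ḡ⁻¹)_{μν}A_{νμ}`. -/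
def tr2 (Ginv : ι → ι → ℝ) (A : ι → ι → ℝ) : ℝ :=
  ∑ μ, ∑ ν, Ginv μ ν * A ν μ

/-- Partial trace of a 4-tensor: `R_{μν}{}^ν{}_κ = Σ_{ν,ν'} (Ḡ⁻¹)_{νν'} R_{μνν'κ}`. -/
def ptr4 (Ginv : ι → ι → ℝ) (R : ι → ι → ι → ι → ℝ) : ι → ι → ℝ :=
  fun μ κ => ∑ ν, ∑ ν', Ginv ν ν' * R μ ν ν' κ

/-- Full trace of a 4-tensor: `R_{μν}{}^{μν} = Σ (Ḡ⁻¹)_{μμ'}(Ḡ⁻¹)_{νν'} R_{μνμ'ν'}`. -/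
def ftr4 (Ginv : ι → ι → ℝ) (R : ι → ι → ι → ι → ℝ) : ℝ :=
  ∑ μ, ∑ μ', ∑ ν, ∑ ν', Ginv μ μ' * Ginv ν ν' * R μ ν μ' ν'

/-- The curvature 4-tensor of a generalized Schwarzschild–Tangherlini geometry,
`T = ρ[((n−2)(n−3)/2)(g⊙g) + (P⊙P) − (n−3)(g⊙P)]`. -/
noncomputable def Tgst (n : ℕ) (ρ : ℝ) (g P : ι → ι → ℝ) : ι → ι → ι → ι → ℝ :=
  fun μ ν l κ => ρ * (((n : ℝ) - 2) * ((n : ℝ) - 3) / 2 * KN g g μ ν l κ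
    + KN P P μ ν l κ - ((n : ℝ) - 3) * KN g P μ ν l κ)

section AuxLemmas

set_option linter.unusedSectionVars false
set_option linter.unusedVariables false

lemma PR.fact4 (f g : ι → ι → ℝ) :
    ∑ σ : ι, ∑ τ : ι, ∑ σ' : ι, ∑ τ' : ι, f σ σ' * g τ τ' =
      (∑ σ : ι, ∑ σ' : ι, f σ σ') * (∑ τ : ι, ∑ τ' : ι, g τ τ') := by
  simp only [← Finset.mul_sum, ← Finset.sum_mul]

lemma PR.fact4' (f g : ι → ι → ℝ) :
    ∑ a : ι, ∑ b : ι, ∑ c : ι, ∑ d : ι, f a b * g c d =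
      (∑ a : ι, ∑ b : ι, f a b) * (∑ c : ι, ∑ d : ι, g c d) := by
  simp only [← Finset.mul_sum, ← Finset.sum_mul]

lemma PR.sum4_block (f : ι → ι → ι → ι → ℝ) :
    ∑ a : ι, ∑ b : ι, ∑ c : ι, ∑ d : ι, f a b c d
      = ∑ c : ι, ∑ d : ι, ∑ a : ι, ∑ b : ι, f a b c d := by
  calc ∑ a : ι, ∑ b : ι, ∑ c : ι, ∑ d : ι, f a b c d
      = ∑ a : ι, ∑ c : ι, ∑ b : ι, ∑ d : ι, f a b c d :=
        Finset.sum_congr rfl fun a _ => Finset.sum_comm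
    _ = ∑ c : ι, ∑ a : ι, ∑ b : ι, ∑ d : ι, f a b c d := Finset.sum_comm
    _ = ∑ c : ι, ∑ a : ι, ∑ d : ι, ∑ b : ι, f a b c d :=
        Finset.sum_congr rfl fun c _ => Finset.sum_congr rfl fun a _ => Finset.sum_comm
    _ = ∑ c : ι, ∑ d : ι, ∑ a : ι, ∑ b : ι, f a b c d :=
        Finset.sum_congr rfl fun c _ => Finset.sum_comm

lemma PR.dot4_KN (Ginv A B C D : ι → ι → ℝ) (μ ν l κ : ι) :
    dot4 Ginv (KN A B) (KN C D) μ ν l κ =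
      2 * (KN (dot2 Ginv A C) (dot2 Ginv B D) μ ν l κ
         + KN (dot2 Ginv A D) (dot2 Ginv B C) μ ν l κ) := by
  have step : dot4 Ginv (KN A B) (KN C D) μ ν l κ =
      ∑ σ : ι, ∑ τ : ι, ∑ σ' : ι, ∑ τ' : ι,
        ((A μ σ * Ginv σ σ' * C σ' l) * (B ν τ * Ginv τ τ' * D τ' κ)
        - (A μ σ * Ginv σ σ' * D σ' κ) * (B ν τ * Ginv τ τ' * C τ' l)
        - (A μ σ * Ginv σ σ' * C σ' κ) * (B ν τ * Ginv τ τ' * D τ' l)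
        + (A μ σ * Ginv σ σ' * D σ' l) * (B ν τ * Ginv τ τ' * C τ' κ)
        - (A ν σ * Ginv σ σ' * C σ' l) * (B μ τ * Ginv τ τ' * D τ' κ)
        + (A ν σ * Ginv σ σ' * D σ' κ) * (B μ τ * Ginv τ τ' * C τ' l)
        + (A ν σ * Ginv σ σ' * C σ' κ) * (B μ τ * Ginv τ τ' * D τ' l)
        - (A ν σ * Ginv σ σ' * D σ' l) * (B μ τ * Ginv τ τ' * C τ' κ)
        - (B ν σ * Ginv σ σ' * C σ' l) * (A μ τ * Ginv τ τ' * D τ' κ)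
        + (B ν σ * Ginv σ σ' * D σ' κ) * (A μ τ * Ginv τ τ' * C τ' l)
        + (B ν σ * Ginv σ σ' * C σ' κ) * (A μ τ * Ginv τ τ' * D τ' l)
        - (B ν σ * Ginv σ σ' * D σ' l) * (A μ τ * Ginv τ τ' * C τ' κ)
        + (B μ σ * Ginv σ σ' * C σ' l) * (A ν τ * Ginv τ τ' * D τ' κ)
        - (B μ σ * Ginv σ σ' * D σ' κ) * (A ν τ * Ginv τ τ' * C τ' l)
        - (B μ σ * Ginv σ σ' * C σ' κ) * (A ν τ * Ginv τ τ' * D τ' l)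
        + (B μ σ * Ginv σ σ' * D σ' l) * (A ν τ * Ginv τ τ' * C τ' κ)) := by
    refine Finset.sum_congr rfl fun σ _ => Finset.sum_congr rfl fun τ _ =>
      Finset.sum_congr rfl fun σ' _ => Finset.sum_congr rfl fun τ' _ => ?_
    simp only [KN]; ring
  rw [step]
  simp only [Finset.sum_add_distrib, Finset.sum_sub_distrib, PR.fact4]
  simp only [KN, dot2]
  ring

lemma PR.ptr4_KN (Ginv A B : ι → ι → ℝ)
    (hG : ∀ a b, Ginv a b = Ginv b a)
    (hA : ∀ a b, A a b = A b a) (hB : ∀ a b, B a b = B b a) (μ κ : ι) :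
    ptr4 Ginv (KN A B) μ κ =
      dot2 Ginv A B μ κ + dot2 Ginv B A μ κ - tr2 Ginv A * B μ κ - tr2 Ginv B * A μ κ := by
  have step : ptr4 Ginv (KN A B) μ κ =
      ∑ ν : ι, ∑ ν' : ι,
        (A μ ν' * Ginv ν' ν * B ν κ + B μ ν' * Ginv ν' ν * A ν κ
          - (Ginv ν ν' * A ν' ν) * B μ κ - (Ginv ν ν' * B ν' ν) * A μ κ) := by
    refine Finset.sum_congr rfl fun ν _ => Finset.sum_congr rfl fun ν' _ => ?_
    simp only [KN, ptr4]
    linear_combination (A μ ν' * B ν κ + A ν κ * B μ ν') * hG ν ν'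
      - Ginv ν ν' * B μ κ * hA ν ν' - Ginv ν ν' * A μ κ * hB ν ν'
  have h1 : ∑ ν : ι, ∑ ν' : ι, A μ ν' * Ginv ν' ν * B ν κ = dot2 Ginv A B μ κ := by
    rw [dot2]; exact Finset.sum_comm
  have h4 : ∑ ν : ι, ∑ ν' : ι, B μ ν' * Ginv ν' ν * A ν κ = dot2 Ginv B A μ κ := by
    rw [dot2]; exact Finset.sum_comm
  have h2 : ∑ ν : ι, ∑ ν' : ι, (Ginv ν ν' * A ν' ν) * B μ κ = tr2 Ginv A * B μ κ := by
    simp only [← Finset.sum_mul]; rfl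
  have h3 : ∑ ν : ι, ∑ ν' : ι, (Ginv ν ν' * B ν' ν) * A μ κ = tr2 Ginv B * A μ κ := by
    simp only [← Finset.sum_mul]; rfl
  calc ptr4 Ginv (KN A B) μ κ = _ := step
    _ = _ := by
        simp only [Finset.sum_add_distrib, Finset.sum_sub_distrib]
        rw [h1, h4, h2, h3]

lemma PR.ftr4_KN (Ginv A B : ι → ι → ℝ)
    (hG : ∀ a b, Ginv a b = Ginv b a)
    (hA : ∀ a b, A a b = A b a) (hB : ∀ a b, B a b = B b a) :
    ftr4 Ginv (KN A B) =
      2 * (tr2 Ginv A * tr2 Ginv B) - 2 * tr2 Ginv (dot2 Ginv A B) := by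
  have htr : tr2 Ginv (dot2 Ginv A B)
      = ∑ p : ι, ∑ q : ι, ∑ x : ι, ∑ y : ι, Ginv p q * (A q x * Ginv x y * B y p) := by
    simp only [tr2, dot2, Finset.mul_sum]
  have step : ftr4 Ginv (KN A B) =
      ∑ μ : ι, ∑ μ' : ι, ∑ ν : ι, ∑ ν' : ι,
        ((Ginv μ μ' * A μ' μ) * (Ginv ν ν' * B ν' ν)
        + (Ginv μ μ' * B μ' μ) * (Ginv ν ν' * A ν' ν)
        - Ginv μ μ' * (A μ' ν * Ginv ν ν' * B ν' μ)
        - Ginv ν ν' * (A ν' μ * Ginv μ μ' * B μ' ν)) := by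
    refine Finset.sum_congr rfl fun μ _ => Finset.sum_congr rfl fun μ' _ =>
      Finset.sum_congr rfl fun ν _ => Finset.sum_congr rfl fun ν' _ => ?_
    simp only [KN, ftr4]
    linear_combination (Ginv μ μ' * Ginv ν ν') *
      (B ν ν' * hA μ μ' + A μ' μ * hB ν ν' + B μ μ' * hA ν ν' + A ν' ν * hB μ μ'
       - B μ ν' * hA ν μ' - A μ' ν * hB μ ν' - B ν μ' * hA μ ν' - A ν' μ * hB ν μ')
  rw [step]
  simp only [Finset.sum_add_distrib, Finset.sum_sub_distrib]
  rw [show (∑ μ : ι, ∑ μ' : ι, ∑ ν : ι, ∑ ν' : ι,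
      (Ginv μ μ' * A μ' μ) * (Ginv ν ν' * B ν' ν))
    = (∑ μ : ι, ∑ μ' : ι, Ginv μ μ' * A μ' μ) * (∑ ν : ι, ∑ ν' : ι, Ginv ν ν' * B ν' ν)
    from PR.fact4' _ _]
  rw [show (∑ μ : ι, ∑ μ' : ι, ∑ ν : ι, ∑ ν' : ι,
      (Ginv μ μ' * B μ' μ) * (Ginv ν ν' * A ν' ν))
    = (∑ μ : ι, ∑ μ' : ι, Ginv μ μ' * B μ' μ) * (∑ ν : ι, ∑ ν' : ι, Ginv ν ν' * A ν' ν)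
    from PR.fact4' _ _]
  have h3 : (∑ μ : ι, ∑ μ' : ι, ∑ ν : ι, ∑ ν' : ι,
      Ginv ν ν' * (A ν' μ * Ginv μ μ' * B μ' ν)) = tr2 Ginv (dot2 Ginv A B) := by
    rw [htr, PR.sum4_block]
  rw [h3, htr]
  rw [show tr2 Ginv A = ∑ μ : ι, ∑ μ' : ι, Ginv μ μ' * A μ' μ from rfl,
      show tr2 Ginv B = ∑ μ : ι, ∑ μ' : ι, Ginv μ μ' * B μ' μ from rfl]
  ring

open Matrix in
lemma PR.ginv_symm (Gbar Ginv : ι → ι → ℝ)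
    (hGsymm : ∀ μ ν, Gbar μ ν = Gbar ν μ)
    (hGinv : ∀ μ l, ∑ ν, Gbar μ ν * Ginv ν l = if μ = l then (1 : ℝ) else 0) :
    ∀ μ ν, Ginv μ ν = Ginv ν μ := by
  set M : Matrix ι ι ℝ := Matrix.of Gbar with hM
  set N : Matrix ι ι ℝ := Matrix.of Ginv with hN
  have hMN : M * N = 1 := by
    ext μ l
    simpa [Matrix.mul_apply, Matrix.one_apply, hM, hN] using hGinv μ l
  have hMs : Mᵀ = M := by
    ext i j; simp [Matrix.transpose_apply, hM, hGsymm i j]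
  have hNs : Nᵀ = N := by
    calc Nᵀ = Nᵀ * (M * N) := by rw [hMN, mul_one]
    _ = (Nᵀ * Mᵀ) * N := by rw [← mul_assoc, hMs]
    _ = (M * N)ᵀ * N := by rw [Matrix.transpose_mul]
    _ = N := by rw [hMN, Matrix.transpose_one, one_mul]
  intro μ ν
  have := congrFun (congrFun hNs ν) μ
  simpa [Matrix.transpose_apply, hN] using this

end AuxLemmas

/-- Under the projector hypotheses with `n ≥ 5` and `ρ ≠ 0`,
the projector can be recovered from the curvature:
`P_{λκ} = [2(n−2)²/((n−1)(n−4))]·(T·T)_{λν}{}^ν{}_κ/(T·T)_{μν}{}^{μν}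
  + [(n−2)(n−3)/((n−1)(n−4))]·Ḡ_{λκ}`, the denominator being nonzero. -/
theorem projector_recovery {n : ℕ} (hn : 5 ≤ n) (hcard : Fintype.card ι = n)
    (Gbar Ginv g P : ι → ι → ℝ) (ρ : ℝ)
    (hGsymm : ∀ μ ν, Gbar μ ν = Gbar ν μ)
    (hGinv : ∀ μ l, ∑ ν, Gbar μ ν * Ginv ν l = if μ = l then (1 : ℝ) else 0)
    (hsplit : ∀ μ ν, Gbar μ ν = g μ ν + P μ ν)
    (hgsymm : ∀ μ ν, g μ ν = g ν μ) (hPsymm : ∀ μ ν, P μ ν = P ν μ)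
    (hgg : ∀ μ ν, dot2 Ginv g g μ ν = g μ ν)
    (hPP : ∀ μ ν, dot2 Ginv P P μ ν = P μ ν)
    (hgP : ∀ μ ν, dot2 Ginv g P μ ν = 0)
    (htrg : tr2 Ginv g = 2)
    (htrP : tr2 Ginv P = (n : ℝ) - 2)
    (hρ : ρ ≠ 0) :
    ftr4 Ginv (dot4 Ginv (Tgst n ρ g P) (Tgst n ρ g P)) ≠ 0 ∧
    ∀ l κ,
      P l κ =
        2 * ((n : ℝ) - 2) ^ 2 / (((n : ℝ) - 1) * ((n : ℝ) - 4))
          * (ptr4 Ginv (dot4 Ginv (Tgst n ρ g P) (Tgst n ρ g P)) l κ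
            / ftr4 Ginv (dot4 Ginv (Tgst n ρ g P) (Tgst n ρ g P)))
        + ((n : ℝ) - 2) * ((n : ℝ) - 3) / (((n : ℝ) - 1) * ((n : ℝ) - 4))
          * Gbar l κ := by
  have hGis : ∀ μ ν, Ginv μ ν = Ginv ν μ := PR.ginv_symm Gbar Ginv hGsymm hGinv
  -- dot2 Ginv P g = 0
  have hPg : ∀ μ ν, dot2 Ginv P g μ ν = 0 := by
    intro μ ν
    have h : dot2 Ginv P g μ ν = dot2 Ginv g P ν μ := by
      simp only [dot2]
      rw [Finset.sum_comm]
      refine Finset.sum_congr rfl fun x _ => Finset.sum_congr rfl fun y _ => ?_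
      linear_combination Ginv y x * g x ν * hPsymm μ y + P y μ * g x ν * hGis y x
        + P y μ * Ginv x y * hgsymm x ν
    rw [h, hgP]
  set nr : ℝ := (n : ℝ) with hnr
  -- pointwise formula for T·T
  have hTT : ∀ μ ν l κ, dot4 Ginv (Tgst n ρ g P) (Tgst n ρ g P) μ ν l κ =
      ρ ^ 2 * ((nr - 2) ^ 2 * (nr - 3) ^ 2 * KN g g μ ν l κ
        + 4 * KN P P μ ν l κ + 2 * (nr - 3) ^ 2 * KN g P μ ν l κ) := by
    intro μ ν l κ
    have e1 : dot4 Ginv (KN g g) (KN g g) μ ν l κ = 4 * KN g g μ ν l κ := by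
      rw [PR.dot4_KN]; simp only [KN, hgg]; ring
    have e2 : dot4 Ginv (KN g g) (KN P P) μ ν l κ = 0 := by
      rw [PR.dot4_KN]; simp only [KN, hgP]; ring
    have e3 : dot4 Ginv (KN g g) (KN g P) μ ν l κ = 0 := by
      rw [PR.dot4_KN]; simp only [KN, hgg, hgP]; ring
    have e4 : dot4 Ginv (KN P P) (KN g g) μ ν l κ = 0 := by
      rw [PR.dot4_KN]; simp only [KN, hPg]; ring
    have e5 : dot4 Ginv (KN P P) (KN P P) μ ν l κ = 4 * KN P P μ ν l κ := by
      rw [PR.dot4_KN]; simp only [KN, hPP]; ring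
    have e6 : dot4 Ginv (KN P P) (KN g P) μ ν l κ = 0 := by
      rw [PR.dot4_KN]; simp only [KN, hPg, hPP]; ring
    have e7 : dot4 Ginv (KN g P) (KN g g) μ ν l κ = 0 := by
      rw [PR.dot4_KN]; simp only [KN, hgg, hPg]; ring
    have e8 : dot4 Ginv (KN g P) (KN P P) μ ν l κ = 0 := by
      rw [PR.dot4_KN]; simp only [KN, hgP, hPP]; ring
    have e9 : dot4 Ginv (KN g P) (KN g P) μ ν l κ = 2 * KN g P μ ν l κ := by
      rw [PR.dot4_KN]; simp only [KN, hgg, hPP, hgP, hPg]; ring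
    have expand : dot4 Ginv (Tgst n ρ g P) (Tgst n ρ g P) μ ν l κ =
        ρ ^ 2 * (((nr - 2) * (nr - 3) / 2) ^ 2 * dot4 Ginv (KN g g) (KN g g) μ ν l κ
          + ((nr - 2) * (nr - 3) / 2) * dot4 Ginv (KN g g) (KN P P) μ ν l κ
          - ((nr - 2) * (nr - 3) / 2) * (nr - 3) * dot4 Ginv (KN g g) (KN g P) μ ν l κ
          + ((nr - 2) * (nr - 3) / 2) * dot4 Ginv (KN P P) (KN g g) μ ν l κ
          + dot4 Ginv (KN P P) (KN P P) μ ν l κ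
          - (nr - 3) * dot4 Ginv (KN P P) (KN g P) μ ν l κ
          - ((nr - 2) * (nr - 3) / 2) * (nr - 3) * dot4 Ginv (KN g P) (KN g g) μ ν l κ
          - (nr - 3) * dot4 Ginv (KN g P) (KN P P) μ ν l κ
          + (nr - 3) ^ 2 * dot4 Ginv (KN g P) (KN g P) μ ν l κ) := by
      simp only [dot4, Tgst, Finset.mul_sum, ← Finset.sum_add_distrib,
        ← Finset.sum_sub_distrib]
      refine Finset.sum_congr rfl fun σ _ => Finset.sum_congr rfl fun τ _ =>
        Finset.sum_congr rfl fun σ' _ => Finset.sum_congr rfl fun τ' _ => ?_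
      rw [hnr]; ring
    rw [expand, e1, e2, e3, e4, e5, e6, e7, e8, e9]
    ring
  -- partial trace of T·T
  have hptr : ∀ x y, ptr4 Ginv (dot4 Ginv (Tgst n ρ g P) (Tgst n ρ g P)) x y =
      ρ ^ 2 * ((-2) * (nr - 1) * (nr - 2) * (nr - 3) ^ 2 * g x y
        + (-4) * (nr - 1) * (nr - 3) * P x y) := by
    intro x y
    have step : ptr4 Ginv (dot4 Ginv (Tgst n ρ g P) (Tgst n ρ g P)) x y =
        ρ ^ 2 * ((nr - 2) ^ 2 * (nr - 3) ^ 2 * ptr4 Ginv (KN g g) x y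
          + 4 * ptr4 Ginv (KN P P) x y + 2 * (nr - 3) ^ 2 * ptr4 Ginv (KN g P) x y) := by
      simp only [ptr4, Finset.mul_sum, ← Finset.sum_add_distrib]
      refine Finset.sum_congr rfl fun ν _ => Finset.sum_congr rfl fun ν' _ => ?_
      rw [hTT]; ring
    rw [step, PR.ptr4_KN Ginv g g hGis hgsymm hgsymm,
      PR.ptr4_KN Ginv P P hGis hPsymm hPsymm,
      PR.ptr4_KN Ginv g P hGis hgsymm hPsymm]
    simp only [hgg, hPP, hgP, hPg, htrg, htrP, ← hnr]
    ring
  -- full trace of T·T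
  have hftr : ftr4 Ginv (dot4 Ginv (Tgst n ρ g P) (Tgst n ρ g P)) =
      ρ ^ 2 * (4 * (nr - 1) * (nr - 2) ^ 2 * (nr - 3)) := by
    have step : ftr4 Ginv (dot4 Ginv (Tgst n ρ g P) (Tgst n ρ g P)) =
        ρ ^ 2 * ((nr - 2) ^ 2 * (nr - 3) ^ 2 * ftr4 Ginv (KN g g)
          + 4 * ftr4 Ginv (KN P P) + 2 * (nr - 3) ^ 2 * ftr4 Ginv (KN g P)) := by
      simp only [ftr4, Finset.mul_sum, ← Finset.sum_add_distrib]
      refine Finset.sum_congr rfl fun μ _ => Finset.sum_congr rfl fun μ' _ =>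
        Finset.sum_congr rfl fun ν _ => Finset.sum_congr rfl fun ν' _ => ?_
      rw [hTT]; ring
    have t1 : tr2 Ginv (dot2 Ginv g g) = 2 := by
      unfold tr2; simp only [hgg]; exact htrg
    have t2 : tr2 Ginv (dot2 Ginv P P) = nr - 2 := by
      unfold tr2; simp only [hPP]; exact htrP
    have t3 : tr2 Ginv (dot2 Ginv g P) = 0 := by
      simp only [tr2, hgP, mul_zero, Finset.sum_const_zero]
    rw [step, PR.ftr4_KN Ginv g g hGis hgsymm hgsymm,
      PR.ftr4_KN Ginv P P hGis hPsymm hPsymm,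
      PR.ftr4_KN Ginv g P hGis hgsymm hPsymm,
      t1, t2, t3, htrg, htrP]
    ring
  have hn5 : (5 : ℝ) ≤ nr := by rw [hnr]; exact_mod_cast hn
  have h1 : nr - 1 ≠ 0 := by nlinarith
  have h2 : nr - 2 ≠ 0 := by nlinarith
  have h3 : nr - 3 ≠ 0 := by nlinarith
  have h4 : nr - 4 ≠ 0 := by nlinarith
  have hden : ftr4 Ginv (dot4 Ginv (Tgst n ρ g P) (Tgst n ρ g P)) ≠ 0 := by
    rw [hftr]
    refine mul_ne_zero (pow_ne_zero 2 hρ) ?_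
    refine mul_ne_zero (mul_ne_zero (mul_ne_zero ?_ h1) (pow_ne_zero 2 h2)) h3
    norm_num
  refine ⟨hden, fun l κ => ?_⟩
  rw [hptr l κ, hftr, hsplit l κ]
  field_simp
  ring
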